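/- arXiv:2303.10491 — 2 statements merged into one kernel-verified Lean document; each statement's English description precedes it below -/
import Mathlib

section
/- The integral ∫_{-π}^{π} √((2 − cos q)² − 1) dq equals 2π + 4. -/
open Real

noncomputable def Fdisp (q : ℝ) : ℝ :=
  -4 * Real.arctan (Real.cos (q/2) / Real.sqrt (1 + Real.sin (q/2)^2))
    - 2 * (Real.cos (q/2) * Real.sqrt (1 + Real.sin (q/2)^2))

lemma hasDerivAt_Fdisp (q : ℝ) :
    HasDerivAt Fdisp (2 * Real.sin (q/2) * Real.sqrt (1 + Real.sin (q/2)^2)) q := by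
  set s := Real.sin (q/2) with hs_def
  set c := Real.cos (q/2) with hc_def
  set r := Real.sqrt (1 + s^2) with hr_def
  have hpos : (0:ℝ) < 1 + s^2 := by positivity
  have hrpos : 0 < r := Real.sqrt_pos.mpr hpos
  have hr2 : r^2 = 1 + s^2 := Real.sq_sqrt hpos.le
  have hc2 : c^2 = 1 - s^2 := by
    have := Real.sin_sq_add_cos_sq (q/2)
    rw [← hs_def, ← hc_def] at this; linarith
  have h1 : HasDerivAt (fun q : ℝ => q/2) (1/2) q := (hasDerivAt_id q).div_const 2
  have hs : HasDerivAt (fun q : ℝ => Real.sin (q/2)) (c * (1/2)) q :=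
    h1.sin
  have hc : HasDerivAt (fun q : ℝ => Real.cos (q/2)) (-s * (1/2)) q :=
    h1.cos
  have hs2 : HasDerivAt (fun q : ℝ => 1 + Real.sin (q/2)^2)
      (2 * s ^ 1 * (c * (1/2))) q := ((hs.pow 2).const_add 1)
  have hrD : HasDerivAt (fun q : ℝ => Real.sqrt (1 + Real.sin (q/2)^2))
      (1 / (2 * r) * (2 * s ^ 1 * (c * (1/2)))) q :=
    ((Real.hasDerivAt_sqrt hpos.ne').comp q hs2)
  have hq : HasDerivAt (fun q : ℝ => Real.cos (q/2) / Real.sqrt (1 + Real.sin (q/2)^2))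
      (((-s * (1/2)) * r - c * (1 / (2 * r) * (2 * s ^ 1 * (c * (1/2))))) / r^2) q :=
    hc.div hrD hrpos.ne'
  have hat : HasDerivAt (fun q : ℝ =>
      Real.arctan (Real.cos (q/2) / Real.sqrt (1 + Real.sin (q/2)^2)))
      ((1 / (1 + (c/r)^2)) * (((-s * (1/2)) * r - c * (1 / (2 * r) * (2 * s ^ 1 * (c * (1/2))))) / r^2)) q :=
    hq.arctan
  have hF : HasDerivAt Fdisp
      (-4 * ((1 / (1 + (c/r)^2)) * (((-s * (1/2)) * r - c * (1 / (2 * r) * (2 * s ^ 1 * (c * (1/2))))) / r^2))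
        - 2 * ((-s * (1/2)) * r + c * (1 / (2 * r) * (2 * s ^ 1 * (c * (1/2)))))) q := by
    exact ((hat.const_mul (-4)).sub ((hc.mul hrD).const_mul 2))
  convert hF using 1
  have h2 : 1 + (c/r)^2 = 2 / r^2 := by
    field_simp
    nlinarith [hr2, hc2]
  rw [h2]
  field_simp
  nlinarith [hr2, hc2, hrpos]

theorem integral_sqrt_dispersion :
    ∫ q in (-π)..π, Real.sqrt ((2 - Real.cos q) ^ 2 - 1) = 2 * π + 4 := by
  have hcont : Continuous (fun q : ℝ => Real.sqrt ((2 - Real.cos q) ^ 2 - 1)) := by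
    fun_prop
  have hsplit : (∫ q in (-π)..π, Real.sqrt ((2 - Real.cos q) ^ 2 - 1))
      = (∫ q in (-π)..(0:ℝ), Real.sqrt ((2 - Real.cos q) ^ 2 - 1))
        + ∫ q in (0:ℝ)..π, Real.sqrt ((2 - Real.cos q) ^ 2 - 1) := by
    rw [intervalIntegral.integral_add_adjacent_intervals
      (hcont.intervalIntegrable _ _) (hcont.intervalIntegrable _ _)]
  have heven : (∫ q in (-π)..(0:ℝ), Real.sqrt ((2 - Real.cos q) ^ 2 - 1))
      = ∫ q in (0:ℝ)..π, Real.sqrt ((2 - Real.cos q) ^ 2 - 1) := by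
    have := intervalIntegral.integral_comp_neg (a := (0:ℝ)) (b := π)
      (fun q => Real.sqrt ((2 - Real.cos q) ^ 2 - 1))
    simp only [Real.cos_neg, neg_zero] at this
    exact this.symm
  have hhalf : (∫ q in (0:ℝ)..π, Real.sqrt ((2 - Real.cos q) ^ 2 - 1)) = π + 2 := by
    have hEq : ∀ q ∈ Set.uIcc (0:ℝ) π,
        Real.sqrt ((2 - Real.cos q) ^ 2 - 1)
          = 2 * Real.sin (q/2) * Real.sqrt (1 + Real.sin (q/2)^2) := by
      intro q hq
      rw [Set.uIcc_of_le Real.pi_pos.le] at hq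
      have hs : 0 ≤ Real.sin (q/2) := by
        apply Real.sin_nonneg_of_nonneg_of_le_pi
        · linarith [hq.1]
        · linarith [hq.2, Real.pi_pos]
      have hcos : Real.cos q = 1 - 2 * Real.sin (q/2)^2 := by
        have h := Real.cos_sq (q/2)
        rw [show 2*(q/2) = q by ring] at h
        have h2 := Real.sin_sq_add_cos_sq (q/2)
        linarith
      have hkey : (2 - Real.cos q) ^ 2 - 1
          = (2 * Real.sin (q/2) * Real.sqrt (1 + Real.sin (q/2)^2))^2 := by
        have hr2 : (Real.sqrt (1 + Real.sin (q/2)^2))^2 = 1 + Real.sin (q/2)^2 :=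
          Real.sq_sqrt (by positivity)
        rw [mul_pow, mul_pow, hr2, hcos]; ring
      rw [hkey, Real.sqrt_sq (by positivity)]
    rw [intervalIntegral.integral_congr hEq]
    rw [intervalIntegral.integral_eq_sub_of_hasDerivAt
      (fun q _ => hasDerivAt_Fdisp q)
      ((by fun_prop : Continuous (fun q : ℝ =>
        2 * Real.sin (q/2) * Real.sqrt (1 + Real.sin (q/2)^2))).intervalIntegrable _ _)]
    simp [Fdisp, Real.cos_pi_div_two, Real.sin_pi_div_two]
    ring
  rw [hsplit, heven, hhalf]; ring
end

section
/- Let μ₀⁻ = π(88 − 30π − √(1044π² − 6720π + 10816))/(240π − 24π² − 512), μ₀⁺ = π(88 − 30π + √(1044π² − 6720π + 10816))/(240π − 24π² − 512), μ₁⁻ = (128 − 16π − 9π² − √(225π⁴ − 1440π³ + 3904π² − 10240π + 16384))/(120π − 12π² − 256), μ₁⁺ = (128 − 16π − 9π² + √(225π⁴ − 1440π³ + 3904π² − 10240π + 16384))/(120π − 12π² − 256). Then μ₁⁻ < μ₀⁻ < μ₁⁺ < μ₀⁺ < 0. -/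
open Real

set_option maxHeartbeats 1000000 in
theorem mu_roots_order :
    let μ0m : ℝ := π * (88 - 30 * π - Real.sqrt (1044 * π ^ 2 - 6720 * π + 10816)) /
      (240 * π - 24 * π ^ 2 - 512)
    let μ0p : ℝ := π * (88 - 30 * π + Real.sqrt (1044 * π ^ 2 - 6720 * π + 10816)) /
      (240 * π - 24 * π ^ 2 - 512)
    let μ1m : ℝ := (128 - 16 * π - 9 * π ^ 2 -
        Real.sqrt (225 * π ^ 4 - 1440 * π ^ 3 + 3904 * π ^ 2 - 10240 * π + 16384)) /
      (120 * π - 12 * π ^ 2 - 256)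
    let μ1p : ℝ := (128 - 16 * π - 9 * π ^ 2 +
        Real.sqrt (225 * π ^ 4 - 1440 * π ^ 3 + 3904 * π ^ 2 - 10240 * π + 16384)) /
      (120 * π - 12 * π ^ 2 - 256)
    μ1m < μ0m ∧ μ0m < μ1p ∧ μ1p < μ0p ∧ μ0p < 0 := by
  have hπl : (3.141592 : ℝ) < π := pi_gt_d6
  have hπu : π < 3.141593 := pi_lt_d6
  have harg0 : (0:ℝ) ≤ 1044 * π ^ 2 - 6720 * π + 10816 := by nlinarith
  have hp2l : (9.8696002 : ℝ) < π ^ 2 := by nlinarith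
  have hp2u : π ^ 2 < 9.8696066 := by nlinarith
  have hp3l : (31.006257 : ℝ) < π ^ 3 := by nlinarith
  have hp3u : π ^ 3 < 31.006287 := by nlinarith
  have hp4l : (97.409009 : ℝ) < π ^ 4 := by nlinarith
  have hp4u : π ^ 4 < 97.409134 := by nlinarith
  have harg1 : (0:ℝ) ≤ 225 * π ^ 4 - 1440 * π ^ 3 + 3904 * π ^ 2 - 10240 * π + 16384 := by
    nlinarith
  set a := Real.sqrt (1044 * π ^ 2 - 6720 * π + 10816) with ha
  set b := Real.sqrt (225 * π ^ 4 - 1440 * π ^ 3 + 3904 * π ^ 2 - 10240 * π + 16384) with hb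
  have ha2 : a ^ 2 = 1044 * π ^ 2 - 6720 * π + 10816 := Real.sq_sqrt harg0
  have hb2 : b ^ 2 = 225 * π ^ 4 - 1440 * π ^ 3 + 3904 * π ^ 2 - 10240 * π + 16384 :=
    Real.sq_sqrt harg1
  have ha0 : (0:ℝ) ≤ a := Real.sqrt_nonneg _
  have hb0 : (0:ℝ) ≤ b := Real.sqrt_nonneg _
  have hal : (2.89209 : ℝ) < a := by nlinarith
  have hau : a < 2.89215 := by nlinarith
  have hbl : (3.61020 : ℝ) < b := by nlinarith
  have hbu : b < 3.61030 := by nlinarith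
  have hkl : (9.0857 : ℝ) < π * a := by nlinarith
  have hku : π * a < 9.0860 := by nlinarith
  have hd1 : (0:ℝ) < 120 * π - 12 * π ^ 2 - 256 := by nlinarith
  have hd0eq : (240 * π - 24 * π ^ 2 - 512 : ℝ) = (120 * π - 12 * π ^ 2 - 256) * 2 := by
    ring
  have h2 : (0:ℝ) < (2:ℝ) := by norm_num
  intro μ0m μ0p μ1m μ1p
  have e0m : μ0m = (π * (88 - 30 * π - a) / 2) / (120 * π - 12 * π ^ 2 - 256) := by
    show π * (88 - 30 * π - a) / (240 * π - 24 * π ^ 2 - 512) = _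
    rw [hd0eq, div_div]
    ring_nf
  have e0p : μ0p = (π * (88 - 30 * π + a) / 2) / (120 * π - 12 * π ^ 2 - 256) := by
    show π * (88 - 30 * π + a) / (240 * π - 24 * π ^ 2 - 512) = _
    rw [hd0eq, div_div]
    ring_nf
  refine ⟨?_, ?_, ?_, ?_⟩
  · show (128 - 16 * π - 9 * π ^ 2 - b) / (120 * π - 12 * π ^ 2 - 256) < μ0m
    rw [e0m, div_lt_div_iff_of_pos_right hd1]
    nlinarith
  · show μ0m < (128 - 16 * π - 9 * π ^ 2 + b) / (120 * π - 12 * π ^ 2 - 256)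
    rw [e0m, div_lt_div_iff_of_pos_right hd1]
    nlinarith
  · show (128 - 16 * π - 9 * π ^ 2 + b) / (120 * π - 12 * π ^ 2 - 256) < μ0p
    rw [e0p, div_lt_div_iff_of_pos_right hd1]
    nlinarith
  · show μ0p < 0
    rw [e0p]
    apply div_neg_of_neg_of_pos _ hd1
    apply div_neg_of_neg_of_pos _ h2
    nlinarith
end
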